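/- Let $P$ be an $n\times n$ real matrix with spectral radius less than 1, and let $F = (I-P)^{-1} = \sum_{k\ge0} P^k$. Let $S\subseteq \{1,\dots,n\}$ be a set of indices such that the submatrix $F_{SS}$ is invertible. Let $P'$ be the matrix obtained from $P$ by zeroing out all rows and columns indexed by $S$ (i.e., the substochastic matrix of the chain where states in $S$ are made absorbing), and suppose $I - P'$ restricted to the complement $T = S^c$ is invertible with inverse $F'$. Then for all $i,m \in T$: $F'_{im} = F_{im} - F_{iS}(F_{SS})^{-1}F_{Sm}$. -/

import Mathlib

open Matrix

/-- Incremental computation of the fundamental matrix (Schur-complement identity):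
enlarging the absorbing set by `S`, the new fundamental matrix on the remaining
transient states `T = Sᶜ` is `F' = F_{TT} - F_{TS} (F_{SS})⁻¹ F_{ST}`. -/
theorem fundamental_matrix_incremental
    {n : Type*} [Fintype n] [DecidableEq n]
    (P F : Matrix n n ℝ)
    (hgeom : HasSum (fun k : ℕ => P ^ k) F)
    (hinv : Invertible (1 - P)) (hF : F = (1 - P)⁻¹)
    (S : Set n) [DecidablePred (· ∈ S)]
    (FSS : Matrix {i // i ∈ S} {i // i ∈ S} ℝ)
    (hFSS : FSS = fun a b => F a.1 b.1) (hFSSinv : IsUnit FSS.det)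
    (P' : Matrix n n ℝ)
    (hP' : ∀ i j, P' i j = if i ∈ S ∨ j ∈ S then 0 else P i j)
    (M : Matrix {i // i ∉ S} {i // i ∉ S} ℝ)
    (hM : M = fun a b => P' a.1 b.1)
    (hMinv : IsUnit (1 - M).det)
    (F' : Matrix {i // i ∉ S} {i // i ∉ S} ℝ) (hF' : F' = (1 - M)⁻¹) :
    ∀ i m : {i // i ∉ S},
      F' i m = F i.1 m.1 -
        ∑ a : {i // i ∈ S}, ∑ b : {i // i ∈ S},
          F i.1 a.1 * (FSS⁻¹ a b) * F b.1 m.1 := by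
  classical
  set e : {i // i ∈ S} ⊕ {i // i ∉ S} ≃ n := Equiv.sumCompl (· ∈ S) with he
  set B : Matrix _ _ ℝ := (1 - P).submatrix e e with hB
  set G : Matrix _ _ ℝ := F.submatrix e e with hG
  have hBG : B * G = 1 := by
    rw [hB, hG, submatrix_mul_equiv, hF,
      Matrix.mul_nonsing_inv _ (isUnit_det_of_invertible _), submatrix_one_equiv]
  set B21 := B.toBlocks₂₁ with hB21
  set B22 := B.toBlocks₂₂ with hB22
  set G11 := G.toBlocks₁₁ with hG11
  set G12 := G.toBlocks₁₂ with hG12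
  set G21 := G.toBlocks₂₁ with hG21
  set G22 := G.toBlocks₂₂ with hG22
  have hBG' : fromBlocks B.toBlocks₁₁ B.toBlocks₁₂ B21 B22 *
      fromBlocks G11 G12 G21 G22 = fromBlocks 1 0 0 1 := by
    rw [fromBlocks_toBlocks, fromBlocks_toBlocks, fromBlocks_one]; exact hBG
  rw [fromBlocks_multiply] at hBG'
  have h21 : B21 * G11 + B22 * G21 = 0 := by
    have := congrArg Matrix.toBlocks₂₁ hBG'
    rw [Matrix.toBlocks_fromBlocks₂₁, Matrix.toBlocks_fromBlocks₂₁] at this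
    exact this
  have h22 : B21 * G12 + B22 * G22 = 1 := by
    have := congrArg Matrix.toBlocks₂₂ hBG'
    rw [Matrix.toBlocks_fromBlocks₂₂, Matrix.toBlocks_fromBlocks₂₂] at this
    exact this
  -- identify blocks
  have hG11F : G11 = FSS := by
    ext a b
    simp [hG11, Matrix.toBlocks₁₁, hG, hFSS, he]
  have hB22M : B22 = 1 - M := by
    ext a b
    have : M a b = P a.1 b.1 := by
      simp [hM, hP' a.1 b.1, a.2, b.2]
    simp [hB22, Matrix.toBlocks₂₂, hB, he, this, Matrix.one_apply, Subtype.ext_iff]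
  set X : Matrix {i // i ∉ S} {i // i ∉ S} ℝ := G22 - G21 * FSS⁻¹ * G12 with hX
  have hright : (1 - M) * X = 1 := by
    have e1 : B22 * G22 = 1 - B21 * G12 := by
      rw [← h22]; abel
    have e2 : B22 * G21 = -(B21 * FSS) := by
      rw [← hG11F]
      have := h21
      linear_combination (norm := noncomm_ring) this
    rw [← hB22M, hX, Matrix.mul_sub, e1, ← Matrix.mul_assoc, ← Matrix.mul_assoc, e2]
    have : B21 * FSS * FSS⁻¹ = B21 := by
      rw [Matrix.mul_assoc, Matrix.mul_nonsing_inv _ hFSSinv, Matrix.mul_one]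
    rw [Matrix.neg_mul, Matrix.neg_mul, this]
    abel
  have hF'X : F' = X := by
    rw [hF', Matrix.inv_eq_right_inv hright]
  intro i m
  rw [hF'X, hX]
  have hG22 : G22 i m = F i.1 m.1 := by
    simp [hG22, Matrix.toBlocks₂₂, hG, he]
  have hprod : (G21 * FSS⁻¹ * G12) i m =
      ∑ a : {i // i ∈ S}, ∑ b : {i // i ∈ S},
        F i.1 a.1 * (FSS⁻¹ a b) * F b.1 m.1 := by
    simp only [Matrix.mul_apply, Finset.sum_mul]
    rw [Finset.sum_comm]
    refine Finset.sum_congr rfl fun b _ => Finset.sum_congr rfl fun a _ => ?_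
    simp [hG21, hG12, Matrix.toBlocks₂₁, Matrix.toBlocks₁₂, hG, he]
  simp [Matrix.sub_apply, hG22, hprod]
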